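/- arXiv:1710.04763 — 4 statements merged into one kernel-verified Lean document; each statement's English description precedes it below -/
import Mathlib

section
/- Let p, x ∈ ℝ³ with |p - x| > r > 0 and let 0 ≤ φ ≤ arcsin(r/|p-x|). Define R₋(φ) = |p-x| cos φ - √(r² - |p-x|² sin² φ) and d = |p-x| - r. Then R₋(φ) - d ≤ |p-x|² sin² φ / r. -/
open Real

/-- with `ℓ = |p - x| > r > 0`, `0 ≤ φ ≤ arcsin(r/ℓ)`,
`R₋(φ) = ℓ cos φ - √(r² - ℓ² sin² φ)` and `d = ℓ - r`, one has
`R₋(φ) - d ≤ ℓ² sin² φ / r`. -/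
theorem Rminus_minus_dist_bound
    (p x : EuclideanSpace ℝ (Fin 3)) (r φ : ℝ) (hr : 0 < r) (h : r < ‖p - x‖)
    (hφ0 : 0 ≤ φ) (hφ1 : φ ≤ Real.arcsin (r / ‖p - x‖)) :
    (‖p - x‖ * Real.cos φ - Real.sqrt (r ^ 2 - ‖p - x‖ ^ 2 * Real.sin φ ^ 2))
      - (‖p - x‖ - r) ≤ ‖p - x‖ ^ 2 * Real.sin φ ^ 2 / r := by
  set ℓ := ‖p - x‖ with hℓ
  have hℓ0 : 0 < ℓ := lt_trans hr h
  have hratio : r / ℓ ≤ 1 := by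
    rw [div_le_one hℓ0]; exact h.le
  have hφpi : φ ≤ π / 2 := le_trans hφ1 (Real.arcsin_le_pi_div_two _)
  have hs0 : 0 ≤ Real.sin φ := Real.sin_nonneg_of_nonneg_of_le_pi hφ0
    (le_trans hφpi (by linarith [Real.pi_pos]))
  have hrl0 : (0:ℝ) ≤ r / ℓ := by positivity
  have hsin : Real.sin φ ≤ r / ℓ := by
    calc Real.sin φ ≤ Real.sin (Real.arcsin (r/ℓ)) := by
          apply Real.sin_le_sin_of_le_of_le_pi_div_two _ (Real.arcsin_le_pi_div_two _) hφ1
          linarith [Real.pi_pos]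
      _ = r / ℓ := Real.sin_arcsin (by linarith) hratio
  have hls : ℓ * Real.sin φ ≤ r := by
    rw [div_eq_mul_inv] at hsin
    calc ℓ * Real.sin φ ≤ ℓ * (r * ℓ⁻¹) := by
          exact mul_le_mul_of_nonneg_left hsin hℓ0.le
      _ = r := by field_simp
  have hnn : 0 ≤ r ^ 2 - ℓ ^ 2 * Real.sin φ ^ 2 := by nlinarith [mul_self_le_mul_self (mul_nonneg hℓ0.le hs0) hls]
  set w := Real.sqrt (r ^ 2 - ℓ ^ 2 * Real.sin φ ^ 2) with hw
  have hw0 : 0 ≤ w := Real.sqrt_nonneg _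
  have hwsq : w ^ 2 = r ^ 2 - ℓ ^ 2 * Real.sin φ ^ 2 := Real.sq_sqrt hnn
  have hc : Real.cos φ ≤ 1 := Real.cos_le_one φ
  rw [div_eq_mul_inv, ← sub_nonneg]
  have hwr : w ≤ r := by nlinarith
  have key : r * (ℓ * Real.cos φ - w - (ℓ - r)) ≤ ℓ ^ 2 * Real.sin φ ^ 2 := by
    nlinarith [mul_nonneg hℓ0.le (sub_nonneg.mpr hc)]
  have : 0 ≤ (ℓ ^ 2 * Real.sin φ ^ 2 - r * (ℓ * Real.cos φ - w - (ℓ - r))) * r⁻¹ :=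
    mul_nonneg (by linarith) (inv_nonneg.mpr hr.le)
  calc (0:ℝ) ≤ (ℓ ^ 2 * Real.sin φ ^ 2 - r * (ℓ * Real.cos φ - w - (ℓ - r))) * r⁻¹ := this
    _ = ℓ ^ 2 * Real.sin φ ^ 2 * r⁻¹ - (ℓ * Real.cos φ - w - (ℓ - r)) := by
        field_simp
end

section
/- Let D ⊂ ℝ³ be open with B(p,r) ⊂ ℝ³ \ closure(D), let Γ be a compact subset of ∂D disjoint from the closed ball B̄(p,r), and let v(x) = (1/(4π)) ∫_{B(p,r)} e^{-τ|x-y|}/|x-y| dy. Then there exist constants C₀ > 0 and τ₀ > 0 such that for all τ ≥ τ₀ and all x ∈ Γ, τ² e^{τ d_e(x,B)} v(x) ≥ C₀, where d_e(x,B) = |x - p| - r. -/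
open MeasureTheory Real

private lemma aux_eps (δ r d : ℝ) (hδ : 0 < δ) (hr : 0 < r) (hd : δ ≤ d) :
    4 * δ / (4 * δ + r) * (4 * d + r) ≤ 4 * d := by
  rw [div_mul_eq_mul_div, div_le_iff₀ (by linarith)]
  nlinarith

private lemma aux_ball (r h ρ c0 c1 c2 : ℝ) (hr : 0 < r) (hh : 0 < h) (hhr : h ≤ r / 2)
    (h0l : r - h < c0) (h0u : c0 < r - h / 2)
    (h1l : -ρ < c1) (h1u : c1 < ρ) (h2l : -ρ < c2) (h2u : c2 < ρ)
    (hρ2 : ρ ^ 2 = r * h / 4) :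
    c0 ^ 2 + c1 ^ 2 + c2 ^ 2 < r ^ 2 := by
  have hc0l : 0 < c0 := by linarith
  have e1 : c1 ^ 2 ≤ ρ ^ 2 := by nlinarith
  have e2 : c2 ^ 2 ≤ ρ ^ 2 := by nlinarith
  have e0 : c0 ^ 2 < (r - h / 2) ^ 2 := by nlinarith
  nlinarith

private lemma aux_dist (r h ρ d τ ε s c0 c1 c2 : ℝ) (hr : 0 < r) (hτ : 0 < τ)
    (hε : 0 < ε) (hε1 : ε ≤ 1) (hh : h = ε / τ) (hhr : h ≤ r / 2)
    (hρ2 : ρ ^ 2 = r * h / 4) (hd : d = s - r) (hdpos : 0 < d)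
    (hεd : ε * (4 * d + r) ≤ 4 * d)
    (h0l : r - h < c0) (h0u : c0 < r - h / 2)
    (h1l : -ρ < c1) (h1u : c1 < ρ) (h2l : -ρ < c2) (h2u : c2 < ρ) :
    (s - c0) ^ 2 + (-c1) ^ 2 + (-c2) ^ 2 ≤ (d + 1 / τ) ^ 2 := by
  have hhpos : 0 < h := by rw [hh]; positivity
  have ht : 0 < 1 / τ := by positivity
  have hsc : s - c0 < d + h := by rw [hd]; linarith
  have hscpos : 0 < s - c0 := by
    have : s - c0 > d + h / 2 := by rw [hd]; linarith
    linarith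
  have e0 : (s - c0) ^ 2 ≤ (d + h) ^ 2 := by nlinarith
  have e1 : c1 ^ 2 ≤ ρ ^ 2 := by nlinarith
  have e2 : c2 ^ 2 ≤ ρ ^ 2 := by nlinarith
  have hht : h = ε * (1 / τ) := by rw [hh]; ring
  have key1 : 2 * d * ε + r * ε / 2 ≤ 2 * d := by linarith
  have key2 : ε ^ 2 ≤ 1 := by nlinarith
  have hkey : (d + h) ^ 2 + r * h / 2 ≤ (d + 1 / τ) ^ 2 := by
    calc (d + h) ^ 2 + r * h / 2
        = d ^ 2 + (2 * d * ε + r * ε / 2) * (1 / τ) + ε ^ 2 * (1 / τ) ^ 2 := by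
          rw [hht]; ring
      _ ≤ d ^ 2 + (2 * d) * (1 / τ) + 1 * (1 / τ) ^ 2 := by
          have g1 := mul_le_mul_of_nonneg_right key1 ht.le
          have g2 := mul_le_mul_of_nonneg_right key2 (sq_nonneg (1 / τ))
          linarith
      _ = (d + 1 / τ) ^ 2 := by ring
  have hsum : ρ ^ 2 + ρ ^ 2 = r * h / 2 := by rw [hρ2]; ring
  nlinarith

set_option maxHeartbeats 1000000 in
/-- uniform lower bound `τ² e^{τ d_e(x,B)} v(x) ≥ C₀` for the volume
potential on a compact part `Γ` of `∂D` disjoint from the closed ball `B(p,r)`. -/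
theorem volume_potential_lower_bound
    (D : Set (EuclideanSpace ℝ (Fin 3))) (hD : IsOpen D)
    (p : EuclideanSpace ℝ (Fin 3)) (r : ℝ) (hr : 0 < r)
    (hB : Metric.ball p r ⊆ (closure D)ᶜ)
    (Γ : Set (EuclideanSpace ℝ (Fin 3))) (hΓc : IsCompact Γ)
    (hΓ : Γ ⊆ frontier D) (hdisj : Disjoint Γ (Metric.closedBall p r))
    (v : ℝ → EuclideanSpace ℝ (Fin 3) → ℝ)
    (hv : ∀ τ x, v τ x = (1 / (4 * π)) *
      ∫ y in Metric.ball p r, Real.exp (-τ * ‖x - y‖) / ‖x - y‖) :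
    ∃ C₀ > (0 : ℝ), ∃ τ₀ > (0 : ℝ), ∀ τ ≥ τ₀, ∀ x ∈ Γ,
      C₀ ≤ τ ^ 2 * Real.exp (τ * (‖x - p‖ - r)) * v τ x := by
  rcases Γ.eq_empty_or_nonempty with hΓe | hne
  · exact ⟨1, one_pos, 1, one_pos, fun τ _ x hx => absurd hx (by simp [hΓe])⟩
  have hπ : (0:ℝ) < π := Real.pi_pos
  have hcont : Continuous fun y : EuclideanSpace ℝ (Fin 3) => ‖y - p‖ :=
    (continuous_id.sub continuous_const).norm
  obtain ⟨xm, hxmΓ, hxmin⟩ := hΓc.exists_isMinOn hne hcont.continuousOn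
  obtain ⟨xM, hxMΓ, hxmax⟩ := hΓc.exists_isMaxOn hne hcont.continuousOn
  set δ : ℝ := ‖xm - p‖ - r with hδdef
  set M : ℝ := ‖xM - p‖ with hMdef
  have hxm_out : r < ‖xm - p‖ := by
    have h1 : xm ∉ Metric.closedBall p r := Set.disjoint_left.mp hdisj hxmΓ
    rw [Metric.mem_closedBall, dist_eq_norm, not_le] at h1
    exact h1
  have hδ : 0 < δ := sub_pos.mpr hxm_out
  have hlb : ∀ x ∈ Γ, r + δ ≤ ‖x - p‖ := by
    intro x hx
    have h2 : ‖xm - p‖ ≤ ‖x - p‖ := hxmin hx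
    simp only [hδdef]
    linarith
  have hub : ∀ x ∈ Γ, ‖x - p‖ ≤ M := fun x hx => hxmax hx
  have hM : r + δ ≤ M := hlb xM hxMΓ
  have hMpos : 0 < M := by linarith
  set ε : ℝ := 4 * δ / (4 * δ + r) with hεdef
  have hεpos : 0 < ε := by positivity
  have hε1 : ε ≤ 1 := by
    rw [hεdef, div_le_one (by positivity)]; linarith
  set C₀ : ℝ := r * ε ^ 2 / (8 * π * Real.exp 1 * (M + 1)) with hC₀def
  have hC₀pos : 0 < C₀ := by
    have := Real.exp_pos (1:ℝ); positivity
  refine ⟨C₀, hC₀pos, max 1 (2 / r), lt_of_lt_of_le one_pos (le_max_left _ _), ?_⟩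
  intro τ hτ x hx
  have hτ1 : (1:ℝ) ≤ τ := le_trans (le_max_left _ _) hτ
  have hτpos : (0:ℝ) < τ := lt_of_lt_of_le one_pos hτ1
  have hτr : 2 / r ≤ τ := le_trans (le_max_right _ _) hτ
  set s : ℝ := ‖x - p‖ with hsdef
  have hsl : r + δ ≤ s := hlb x hx
  have hsu : s ≤ M := hub x hx
  have hspos : 0 < s := by linarith
  have hs0 : s ≠ 0 := ne_of_gt hspos
  set d : ℝ := s - r with hddef
  have hdδ : δ ≤ d := by rw [hddef]; linarith
  have hdpos : 0 < d := lt_of_lt_of_le hδ hdδ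
  set h : ℝ := ε / τ with hhdef
  have hhpos : 0 < h := by positivity
  have htτ : 0 < 1 / τ := by positivity
  have h1τ : h ≤ 1 / τ := by
    rw [hhdef, div_le_div_iff₀ hτpos hτpos]
    nlinarith [hε1, hτpos]
  have hτinv1 : 1 / τ ≤ 1 := by
    rw [div_le_one hτpos]; exact hτ1
  have hhr : h ≤ r / 2 := by
    have h2 : 2 ≤ τ * r := by
      rw [div_le_iff₀ hr] at hτr; linarith
    have h3 : 1 / τ ≤ r / 2 := by
      rw [div_le_div_iff₀ hτpos two_pos]; linarith
    linarith
  -- the key smallness inequality for ε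
  have hεd : ε * (4 * d + r) ≤ 4 * d := aux_eps δ r d hδ hr hdδ
  -- build an adapted orthonormal basis
  set u : EuclideanSpace ℝ (Fin 3) := s⁻¹ • (x - p) with hudef
  have hu : ‖u‖ = 1 := by
    rw [hudef, norm_smul, norm_inv, Real.norm_eq_abs, abs_of_pos hspos, ← hsdef]
    exact inv_mul_cancel₀ hs0
  have horth : Orthonormal ℝ (({0} : Set (Fin 3)).restrict fun _ : Fin 3 => u) := by
    constructor
    · intro i; exact hu
    · intro i j hij
      exact absurd (Subtype.ext ((Set.mem_singleton_iff.mp i.2).trans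
        (Set.mem_singleton_iff.mp j.2).symm)) hij
  obtain ⟨b, hb⟩ := horth.exists_orthonormalBasis_extension_of_card_eq (by simp)
  have hb0 : b 0 = u := hb 0 rfl
  have hxp : x - p = s • b 0 := by
    rw [hb0, hudef, smul_smul, mul_inv_cancel₀ hs0, one_smul]
  -- the thin box
  set ρ : ℝ := Real.sqrt (r * h) / 2 with hρdef
  have hρpos : 0 < ρ := by
    rw [hρdef]; positivity
  have hρ2 : ρ ^ 2 = r * h / 4 := by
    rw [hρdef, div_pow, Real.sq_sqrt (by positivity)]; norm_num
  set I : Fin 3 → Set ℝ := fun i =>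
    if i = 0 then Set.Ioo (r - h) (r - h / 2) else Set.Ioo (-ρ) ρ with hIdef
  set T : Set (EuclideanSpace ℝ (Fin 3)) :=
    ((MeasurableEquiv.toLp 2 (Fin 3 → ℝ)).symm) ⁻¹' Set.univ.pi I with hTdef
  set S : Set (EuclideanSpace ℝ (Fin 3)) := (fun y => b.repr (y - p)) ⁻¹' T with hSdef
  have hTmem : ∀ c : EuclideanSpace ℝ (Fin 3), c ∈ T ↔
      (c 0 ∈ Set.Ioo (r - h) (r - h / 2) ∧ c 1 ∈ Set.Ioo (-ρ) ρ ∧ c 2 ∈ Set.Ioo (-ρ) ρ) := by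
    intro c
    rw [hTdef]
    simp only [Set.mem_preimage, Set.mem_univ_pi, MeasurableEquiv.coe_toLp_symm]
    constructor
    · intro hc
      have h0 := hc 0
      have h1 := hc 1
      have h2 := hc 2
      simp only [hIdef, if_pos rfl, if_neg (by decide : (1 : Fin 3) ≠ 0),
        if_neg (by decide : (2 : Fin 3) ≠ 0)] at h0 h1 h2
      exact ⟨h0, h1, h2⟩
    · rintro ⟨h0, h1, h2⟩ i
      fin_cases i
      · simpa [hIdef] using h0
      · simpa [hIdef, (by decide : (1 : Fin 3) ≠ 0)] using h1
      · simpa [hIdef, (by decide : (2 : Fin 3) ≠ 0)] using h2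
  have hnorm : ∀ c : EuclideanSpace ℝ (Fin 3),
      ‖c‖ = Real.sqrt ((c 0) ^ 2 + (c 1) ^ 2 + (c 2) ^ 2) := by
    intro c
    rw [EuclideanSpace.norm_eq]
    congr 1
    rw [Fin.sum_univ_three]
    simp [Real.norm_eq_abs, sq_abs]
  -- coordinates of y - p and x - y for y ∈ S
  have hcoord : ∀ y : EuclideanSpace ℝ (Fin 3),
      b.repr (x - y) = s • EuclideanSpace.single (0 : Fin 3) (1:ℝ) - b.repr (y - p) := by
    intro y
    have : x - y = (x - p) - (y - p) := by abel
    rw [this, map_sub, hxp, b.repr.map_smul, b.repr_self]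
  have hSball : S ⊆ Metric.ball p r := by
    intro y hy
    obtain ⟨h0, h1, h2⟩ := (hTmem _).mp hy
    set c := b.repr (y - p) with hcdef
    have hnyp : ‖y - p‖ = ‖c‖ := (b.repr.norm_map (y - p)).symm
    rw [Metric.mem_ball, dist_eq_norm, hnyp, hnorm]
    have hsum : (c 0) ^ 2 + (c 1) ^ 2 + (c 2) ^ 2 < r ^ 2 :=
      aux_ball r h ρ (c 0) (c 1) (c 2) hr hhpos hhr h0.1 h0.2 h1.1 h1.2 h2.1 h2.2 hρ2
    calc Real.sqrt ((c 0) ^ 2 + (c 1) ^ 2 + (c 2) ^ 2)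
        < Real.sqrt (r ^ 2) := by
          apply Real.sqrt_lt_sqrt (by positivity) hsum
      _ = r := Real.sqrt_sq hr.le
  have hSdist : ∀ y ∈ S, ‖x - y‖ ≤ d + 1 / τ ∧ δ ≤ ‖x - y‖ := by
    intro y hy
    obtain ⟨h0, h1, h2⟩ := (hTmem _).mp hy
    set c := b.repr (y - p) with hcdef
    have hnxy : ‖x - y‖ = ‖s • EuclideanSpace.single (0 : Fin 3) (1:ℝ) - c‖ := by
      rw [← hcoord y]
      exact (b.repr.norm_map (x - y)).symm
    have he0 : (s • EuclideanSpace.single (0 : Fin 3) (1:ℝ) - c) 0 = s - c 0 := by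
      simp [EuclideanSpace.single_apply]
    have he1 : (s • EuclideanSpace.single (0 : Fin 3) (1:ℝ) - c) 1 = -(c 1) := by
      simp [EuclideanSpace.single_apply]
    have he2 : (s • EuclideanSpace.single (0 : Fin 3) (1:ℝ) - c) 2 = -(c 2) := by
      simp [EuclideanSpace.single_apply]
    constructor
    · rw [hnxy, hnorm, he0, he1, he2]
      have hsum : (s - c 0) ^ 2 + (-(c 1)) ^ 2 + (-(c 2)) ^ 2 ≤ (d + 1 / τ) ^ 2 :=
        aux_dist r h ρ d τ ε s (c 0) (c 1) (c 2) hr hτpos hεpos hε1 hhdef hhr hρ2 hddef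
          hdpos hεd h0.1 h0.2 h1.1 h1.2 h2.1 h2.2
      calc Real.sqrt ((s - c 0) ^ 2 + (-(c 1)) ^ 2 + (-(c 2)) ^ 2)
          ≤ Real.sqrt ((d + 1 / τ) ^ 2) := Real.sqrt_le_sqrt hsum
        _ = d + 1 / τ := Real.sqrt_sq (by positivity)
    · have hyball := hSball hy
      rw [Metric.mem_ball, dist_eq_norm] at hyball
      have htri : ‖x - p‖ - ‖y - p‖ ≤ ‖x - y‖ := by
        have := norm_sub_norm_le (x - p) (y - p)
        rwa [sub_sub_sub_cancel_right] at this
      rw [← hsdef] at htri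
      linarith
  -- measurability & volume of S
  have hpiM : MeasurableSet (Set.univ.pi I) :=
    MeasurableSet.univ_pi fun i => by
      simp only [hIdef]; split_ifs <;> exact measurableSet_Ioo
  have hTm : MeasurableSet T :=
    ((MeasurableEquiv.toLp 2 (Fin 3 → ℝ)).symm).measurable hpiM
  have hΦcont : Continuous fun y : EuclideanSpace ℝ (Fin 3) => b.repr (y - p) :=
    b.repr.continuous.comp (continuous_id.sub continuous_const)
  have hSm : MeasurableSet S := hΦcont.measurable hTm
  have hmpΦ : MeasurePreserving (fun y : EuclideanSpace ℝ (Fin 3) => b.repr (y - p))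
      volume volume :=
    b.measurePreserving_repr.comp (measurePreserving_sub_right volume p)
  have hvolT : volume T = ENNReal.ofReal (h / 2) * (ENNReal.ofReal (2 * ρ)) ^ 2 := by
    rw [hTdef, (EuclideanSpace.volume_preserving_symm_measurableEquiv_toLp (Fin 3)).measure_preimage
      hpiM.nullMeasurableSet, volume_pi_pi, Fin.prod_univ_three]
    simp only [hIdef, if_pos rfl, if_neg (by decide : (1 : Fin 3) ≠ 0),
      if_neg (by decide : (2 : Fin 3) ≠ 0), Real.volume_Ioo]
    rw [show r - h / 2 - (r - h) = h / 2 by ring, show ρ - -ρ = 2 * ρ by ring]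
    ring
  have hvolS : volume S = ENNReal.ofReal (h / 2) * (ENNReal.ofReal (2 * ρ)) ^ 2 := by
    rw [hSdef, hmpΦ.measure_preimage hTm.nullMeasurableSet, hvolT]
  have hvolS_ne : volume S ≠ ⊤ := by
    rw [hvolS]; exact ENNReal.mul_ne_top ENNReal.ofReal_ne_top
      (by exact ENNReal.pow_ne_top ENNReal.ofReal_ne_top)
  have hvolS_real : (volume S).toReal = r * h ^ 2 / 2 := by
    rw [hvolS, ENNReal.toReal_mul, ENNReal.toReal_pow, ENNReal.toReal_ofReal (by positivity),
      ENNReal.toReal_ofReal (by positivity)]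
    have : (2 * ρ) ^ 2 = r * h := by
      rw [mul_pow, hρ2]; ring
    rw [this]; ring
  -- the integrand and its bound on S
  set f : EuclideanSpace ℝ (Fin 3) → ℝ := fun y => Real.exp (-τ * ‖x - y‖) / ‖x - y‖ with hfdef
  set κ : ℝ := Real.exp (-(τ * d) - 1) / (M + 1) with hκdef
  have hfS : ∀ y ∈ S, κ ≤ f y := by
    intro y hy
    obtain ⟨hle, hge⟩ := hSdist y hy
    have hpos : 0 < ‖x - y‖ := lt_of_lt_of_le hδ hge
    have hub' : ‖x - y‖ ≤ M + 1 := by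
      have : d + 1 / τ ≤ M + 1 := by
        rw [hddef]; linarith
      linarith
    have hexp : Real.exp (-(τ * d) - 1) ≤ Real.exp (-τ * ‖x - y‖) := by
      apply Real.exp_le_exp.mpr
      have : τ * ‖x - y‖ ≤ τ * (d + 1 / τ) :=
        mul_le_mul_of_nonneg_left hle hτpos.le
      have hτd : τ * (d + 1 / τ) = τ * d + 1 := by field_simp
      have h2 : τ * ‖x - y‖ ≤ τ * d + 1 := hτd ▸ this
      calc -(τ * d) - 1 = -(τ * d + 1) := by ring
        _ ≤ -(τ * ‖x - y‖) := neg_le_neg h2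
        _ = -τ * ‖x - y‖ := by ring
    rw [hκdef, hfdef]
    exact div_le_div₀ (Real.exp_nonneg _) hexp hpos hub'
  -- integrability
  have hfnn : ∀ y, 0 ≤ f y := by
    intro y; rw [hfdef]; positivity
  have hcf : ContinuousOn f (Metric.closedBall p r) := by
    apply ContinuousOn.div
    · exact (Real.continuous_exp.comp
        ((continuous_const.mul (continuous_const.sub continuous_id).norm))).continuousOn
    · exact ((continuous_const.sub continuous_id).norm).continuousOn
    · intro y hy
      rw [Metric.mem_closedBall, dist_eq_norm] at hy
      have htri : ‖x - p‖ - ‖y - p‖ ≤ ‖x - y‖ := by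
        have := norm_sub_norm_le (x - p) (y - p)
        rwa [sub_sub_sub_cancel_right] at this
      rw [← hsdef] at htri
      have : δ ≤ ‖x - y‖ := by linarith
      exact ne_of_gt (lt_of_lt_of_le hδ this)
  have hint_cb : IntegrableOn f (Metric.closedBall p r) :=
    hcf.integrableOn_compact (isCompact_closedBall p r)
  have hint_ball : IntegrableOn f (Metric.ball p r) :=
    hint_cb.mono_set Metric.ball_subset_closedBall
  have hint_S : IntegrableOn f S := hint_ball.mono_set hSball
  -- integral estimates
  have hstep1 : κ * (volume S).toReal ≤ ∫ y in S, f y :=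
    setIntegral_ge_of_const_le_real hSm hvolS_ne hfS hint_S
  have hstep2 : (∫ y in S, f y) ≤ ∫ y in Metric.ball p r, f y :=
    setIntegral_mono_set hint_ball
      (Filter.Eventually.of_forall fun y => hfnn y)
      (HasSubset.Subset.eventuallyLE hSball)
  have hIb : κ * (r * h ^ 2 / 2) ≤ ∫ y in Metric.ball p r, f y := by
    rw [← hvolS_real]; exact le_trans hstep1 hstep2
  -- final assembly
  rw [hv τ x]
  have hE : 0 < Real.exp (τ * d) := Real.exp_pos _
  have hexp1 : 0 < Real.exp (1 : ℝ) := Real.exp_pos _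
  have hEq : τ ^ 2 * Real.exp (τ * d) * (1 / (4 * π) * (κ * (r * h ^ 2 / 2))) = C₀ := by
    rw [hκdef, hhdef, hC₀def, Real.exp_sub, Real.exp_neg]
    field_simp
    ring
  calc C₀ = τ ^ 2 * Real.exp (τ * d) * (1 / (4 * π) * (κ * (r * h ^ 2 / 2))) := hEq.symm
    _ ≤ τ ^ 2 * Real.exp (τ * d) * (1 / (4 * π) * ∫ y in Metric.ball p r, f y) := by
        have hκpos : 0 < κ := by
          rw [hκdef]; positivity
        apply mul_le_mul_of_nonneg_left _ (by positivity)
        apply mul_le_mul_of_nonneg_left hIb (by positivity)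
    _ = τ ^ 2 * Real.exp (τ * d) *
        (1 / (4 * π) * ∫ y in Metric.ball p r, Real.exp (-τ * ‖x - y‖) / ‖x - y‖) := rfl
end

section
/- Let x, p ∈ ℝ³ with |p - x| > r > 0, τ > 0, and let v(x) = (1/(4π)) ∫_{B(p,r)} e^{-τ|x-y|}/|x-y| dy. Then v(x) ≤ (|p-x| + r)/(4πτ) · ∫_{E_x} (e^{-τ R₋(ω)} - e^{-τ R₊(ω)}) dω, where E_x = {ω ∈ S² : (p-x)·ω > √(|p-x|² - r²)} and R±(ω) = (p-x)·ω ± √(r² - |p-x|² + ((p-x)·ω)²). -/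
open MeasureTheory Real Metric

set_option maxHeartbeats 2000000

noncomputable section

local notation "E3" => EuclideanSpace ℝ (Fin 3)

private lemma polar_decomp (g : E3 → ℝ) (hg : Integrable g) :
    (∫ z, g z) = (∫ ω : Metric.sphere (0 : E3) 1,
        (∫ ρ in Set.Ioi (0:ℝ), ρ ^ 2 * g (ρ • (ω : E3)))
        ∂((volume : Measure E3).toSphere))
    ∧ Integrable (fun ω : Metric.sphere (0 : E3) 1 =>
        ∫ ρ in Set.Ioi (0:ℝ), ρ ^ 2 * g (ρ • (ω : E3)))
        ((volume : Measure E3).toSphere) := by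
  set μ : Measure E3 := volume with hμ
  set G : Metric.sphere (0 : E3) 1 × Set.Ioi (0:ℝ) → ℝ :=
    fun q => g ((q.2 : ℝ) • (q.1 : E3)) with hGdef
  have hcomp : ∀ z : ({(0 : E3)}ᶜ : Set E3),
      G (homeomorphUnitSphereProd E3 z) = g z := by
    intro z
    have hz : (z : E3) ≠ 0 := z.2
    show g ((‖(z : E3)‖ / 1) • ((1:ℝ) • ‖(z : E3)‖⁻¹ • (z : E3))) = g z
    rw [div_one, one_smul, smul_inv_smul₀ (norm_ne_zero_iff.2 hz)]
  have hemb := (homeomorphUnitSphereProd E3).measurableEmbedding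
  have mp := μ.measurePreserving_homeomorphUnitSphereProd
  have hsing : MeasurableSet ({(0:E3)}ᶜ : Set E3) := (measurableSet_singleton _).compl
  have hcomap : Integrable (fun z : ({(0 : E3)}ᶜ : Set E3) => g z)
      (μ.comap Subtype.val) := by
    have h1 : Integrable g (Measure.map (Subtype.val : ({(0:E3)}ᶜ : Set E3) → E3)
        (μ.comap Subtype.val)) := by
      rw [map_comap_subtype_coe hsing]
      exact hg.restrict
    exact (MeasurableEmbedding.subtype_coe hsing).integrable_map_iff.mp h1
  have hG : Integrable G
      (μ.toSphere.prod (Measure.volumeIoiPow (Module.finrank ℝ E3 - 1))) := by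
    refine (mp.integrable_comp_emb hemb).mp ?_
    have : G ∘ (homeomorphUnitSphereProd E3) = fun z : ({(0 : E3)}ᶜ : Set E3) => g z :=
      funext hcomp
    rw [this]
    exact hcomap
  have hinner : ∀ ω : Metric.sphere (0 : E3) 1,
      (∫ ρ : Set.Ioi (0:ℝ), G (ω, ρ)
          ∂(Measure.volumeIoiPow (Module.finrank ℝ E3 - 1)))
        = ∫ ρ in Set.Ioi (0:ℝ), ρ ^ 2 * g (ρ • (ω : E3)) := by
    intro ω
    have hdim : Module.finrank ℝ E3 - 1 = 2 := by
      simp [finrank_euclideanSpace]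
    rw [hdim]
    simp only [Measure.volumeIoiPow, ENNReal.ofReal]
    rw [integral_withDensity_eq_integral_smul
      ((measurable_subtype_coe.pow_const _).real_toNNReal)
      (fun ρ : Set.Ioi (0:ℝ) => G (ω, ρ))]
    rw [integral_subtype_comap measurableSet_Ioi
      (fun a : ℝ => Real.toNNReal (a ^ 2) • g (a • (ω : E3)))]
    refine setIntegral_congr_fun measurableSet_Ioi fun a ha => ?_
    rw [NNReal.smul_def, Real.coe_toNNReal _ (pow_nonneg (le_of_lt ha) 2), smul_eq_mul]
  have key : (∫ z, g z ∂μ)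
      = ∫ q, G q ∂(μ.toSphere.prod (Measure.volumeIoiPow (Module.finrank ℝ E3 - 1))) := by
    calc ∫ z, g z ∂μ = ∫ z in ({(0:E3)}ᶜ : Set E3), g z ∂μ := by
          rw [MeasureTheory.restrict_compl_singleton]
      _ = ∫ z : ({(0:E3)}ᶜ : Set E3), g z ∂(μ.comap Subtype.val) :=
          (integral_subtype_comap hsing g).symm
      _ = ∫ z : ({(0:E3)}ᶜ : Set E3), G (homeomorphUnitSphereProd E3 z)
            ∂(μ.comap Subtype.val) :=
          integral_congr_ae (Filter.Eventually.of_forall fun z => (hcomp z).symm)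
      _ = _ := mp.integral_comp hemb G
  constructor
  · rw [key, integral_prod G hG]
    exact integral_congr_ae (Filter.Eventually.of_forall fun ω => hinner ω)
  · exact (hG.integral_prod_left).congr
      (Filter.Eventually.of_forall fun ω => hinner ω)

private lemma exp_interval_integral (τ a b : ℝ) (hτ : τ ≠ 0) :
    ∫ ρ in a..b, Real.exp (-τ * ρ) = (Real.exp (-τ * a) - Real.exp (-τ * b)) / τ := by
  have h := intervalIntegral.integral_comp_mul_left (a := a) (b := b) (c := -τ)
    Real.exp (neg_ne_zero.mpr hτ)
  rw [h, integral_exp, smul_eq_mul, inv_neg]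
  field_simp
  ring

/-- upper bound for the volume potential `v(x)` of the ball `B(p,r)` by the
solid-angle integral `((|p-x|+r)/(4πτ)) ∫_{E_x} (e^{-τR₋(ω)} - e^{-τR₊(ω)}) dω`. -/
theorem volume_potential_upper_bound
    (p x : EuclideanSpace ℝ (Fin 3)) (r τ : ℝ) (hr : 0 < r) (h : r < ‖p - x‖)
    (hτ : 0 < τ)
    (Rm Rp : EuclideanSpace ℝ (Fin 3) → ℝ)
    (hRm : ∀ ω, Rm ω = (inner ℝ (p - x) ω : ℝ) -
      Real.sqrt (r ^ 2 - ‖p - x‖ ^ 2 + (inner ℝ (p - x) ω : ℝ) ^ 2))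
    (hRp : ∀ ω, Rp ω = (inner ℝ (p - x) ω : ℝ) +
      Real.sqrt (r ^ 2 - ‖p - x‖ ^ 2 + (inner ℝ (p - x) ω : ℝ) ^ 2)) :
    (1 / (4 * π)) * (∫ y in Metric.ball p r, Real.exp (-τ * ‖x - y‖) / ‖x - y‖)
      ≤ (‖p - x‖ + r) / (4 * π * τ) *
        ∫ ω in {ω : sphere (0 : EuclideanSpace ℝ (Fin 3)) 1 |
            (inner ℝ (p - x) (ω : EuclideanSpace ℝ (Fin 3)) : ℝ) >
              Real.sqrt (‖p - x‖ ^ 2 - r ^ 2)},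
          (Real.exp (-τ * Rm (ω : EuclideanSpace ℝ (Fin 3)))
            - Real.exp (-τ * Rp (ω : EuclideanSpace ℝ (Fin 3))))
          ∂((volume : Measure (EuclideanSpace ℝ (Fin 3))).toSphere) := by
  have hπ : (0:ℝ) < π := Real.pi_pos
  set c : E3 := p - x with hc
  have hn0 : (0:ℝ) < ‖c‖ := hr.trans h
  set f : E3 → ℝ := fun z => Real.exp (-τ * ‖z‖) / ‖z‖ with hfdef
  set g : E3 → ℝ := (Metric.ball c r).indicator f with hgdef
  -- Step 1 : translation
  have step1 : (∫ y in Metric.ball p r, Real.exp (-τ * ‖x - y‖) / ‖x - y‖) = ∫ z, g z := by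
    rw [← integral_indicator measurableSet_ball]
    rw [← integral_add_right_eq_self
      ((Metric.ball p r).indicator fun y => Real.exp (-τ * ‖x - y‖) / ‖x - y‖) x]
    refine integral_congr_ae (Filter.Eventually.of_forall fun z => ?_)
    show (Metric.ball p r).indicator (fun y => Real.exp (-τ * ‖x - y‖) / ‖x - y‖) (z + x) = g z
    have hmem : z + x ∈ Metric.ball p r ↔ z ∈ Metric.ball c r := by
      simp only [Metric.mem_ball, dist_eq_norm, hc]
      rw [show z + x - p = z - (p - x) from by abel]
    by_cases hz : z ∈ Metric.ball c r
    · rw [Set.indicator_of_mem (hmem.mpr hz), hgdef, Set.indicator_of_mem hz, hfdef]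
      simp only
      rw [show x - (z + x) = -z from by abel, norm_neg]
    · rw [Set.indicator_of_notMem (fun hh => hz (hmem.mp hh)), hgdef,
        Set.indicator_of_notMem hz]
  -- integrability of g
  have hf_meas : Measurable f := ((measurable_norm.const_mul (-τ)).exp).div measurable_norm
  have hg_meas : Measurable g := hf_meas.indicator measurableSet_ball
  have hg_int : Integrable g := by
    refine Integrable.mono' (g := (Metric.ball c r).indicator fun _ => (‖c‖ - r)⁻¹)
      ((integrableOn_const measure_ball_lt_top.ne).integrable_indicator
        measurableSet_ball)
      hg_meas.aestronglyMeasurable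
      (Filter.Eventually.of_forall fun z => ?_)
    by_cases hz : z ∈ Metric.ball c r
    · rw [hgdef, Set.indicator_of_mem hz, Set.indicator_of_mem hz]
      have hzc : ‖z - c‖ < r := by rwa [Metric.mem_ball, dist_eq_norm] at hz
      have hzn : ‖c‖ - r < ‖z‖ := by
        have h2 : ‖c - z‖ = ‖z - c‖ := by rw [← norm_neg (c - z)]; congr 1; abel
        have := norm_sub_norm_le c z
        linarith
      have hzpos : (0:ℝ) < ‖z‖ := lt_trans (by linarith) hzn
      rw [Real.norm_eq_abs, abs_of_nonneg (div_nonneg (Real.exp_nonneg _) (norm_nonneg _))]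
      have hexp : Real.exp (-τ * ‖z‖) ≤ 1 := by
        rw [Real.exp_le_one_iff]
        nlinarith [norm_nonneg z]
      calc Real.exp (-τ * ‖z‖) / ‖z‖ ≤ 1 / (‖c‖ - r) := by
            apply div_le_div₀ zero_le_one hexp (by linarith) (by linarith)
        _ = (‖c‖ - r)⁻¹ := one_div _
    · rw [hgdef, Set.indicator_of_notMem hz, Set.indicator_of_notMem hz]
      simp
  obtain ⟨hpolar, hI_int⟩ := polar_decomp g hg_int
  set I : Metric.sphere (0 : E3) 1 → ℝ :=
    fun ω => ∫ ρ in Set.Ioi (0:ℝ), ρ ^ 2 * g (ρ • (ω : E3)) with hIdef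
  -- quadratic characterization of the Ioo interval
  have hquad : ∀ (ω : Metric.sphere (0 : E3) 1) (ρ : ℝ),
      ρ ∈ Set.Ioo (Rm (ω : E3)) (Rp (ω : E3)) ↔
        ρ ^ 2 - 2 * (ρ * (inner ℝ c (ω : E3) : ℝ)) + ‖c‖ ^ 2 < r ^ 2 := by
    intro ω ρ
    set t : ℝ := (inner ℝ c (ω : E3) : ℝ) with ht
    set D : ℝ := r ^ 2 - ‖c‖ ^ 2 + t ^ 2 with hDdef
    have hD : Rm (ω : E3) = t - Real.sqrt D := hRm _
    have hD' : Rp (ω : E3) = t + Real.sqrt D := hRp _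
    have habs : |ρ - t| < Real.sqrt D ↔ (ρ - t) ^ 2 < D := by
      rw [Real.lt_sqrt (abs_nonneg _), sq_abs]
    constructor
    · intro hmm
      obtain ⟨h1, h2⟩ := hmm
      rw [hD] at h1; rw [hD'] at h2
      have h4 := habs.mp (by rw [abs_lt]; constructor <;> linarith)
      nlinarith [h4]
    · intro hlt
      have h4 := habs.mpr (by nlinarith)
      rw [abs_lt] at h4
      exact ⟨by rw [hD]; linarith [h4.1], by rw [hD']; linarith [h4.2]⟩
  -- ball membership in terms of Rm, Rp
  have hball : ∀ (ω : Metric.sphere (0 : E3) 1) (ρ : ℝ),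
      ρ • (ω : E3) ∈ Metric.ball c r ↔ ρ ∈ Set.Ioo (Rm (ω : E3)) (Rp (ω : E3)) := by
    intro ω ρ
    have hω : ‖(ω : E3)‖ = 1 := mem_sphere_zero_iff_norm.mp ω.2
    have hns : ‖ρ • (ω : E3) - c‖ ^ 2
        = ρ ^ 2 - 2 * (ρ * (inner ℝ c (ω : E3) : ℝ)) + ‖c‖ ^ 2 := by
      rw [show ‖ρ • (ω : E3) - c‖ ^ 2
            = ‖ρ • (ω : E3)‖ ^ 2 - 2 * (inner ℝ (ρ • (ω : E3)) c : ℝ) + ‖c‖ ^ 2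
          from norm_sub_sq_real _ _,
        norm_smul, hω, real_inner_smul_left, mul_one, Real.norm_eq_abs, sq_abs,
        real_inner_comm]
    rw [hquad ω ρ, ← hns, Metric.mem_ball, dist_eq_norm]
    constructor
    · intro hlt
      exact pow_lt_pow_left₀ hlt (norm_nonneg _) (by norm_num)
    · intro hlt
      nlinarith [norm_nonneg (ρ • (ω : E3) - c)]
  -- rewrite I ω as an integral over an interval
  have hIeq : ∀ ω : Metric.sphere (0 : E3) 1,
      I ω = ∫ ρ in Set.Ioi (0:ℝ) ∩ Set.Ioo (Rm (ω : E3)) (Rp (ω : E3)),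
        ρ * Real.exp (-τ * ρ) := by
    intro ω
    have heq : I ω = ∫ ρ in Set.Ioi (0:ℝ),
        (Set.Ioo (Rm (ω : E3)) (Rp (ω : E3))).indicator
          (fun ρ => ρ * Real.exp (-τ * ρ)) ρ := by
      refine setIntegral_congr_fun measurableSet_Ioi fun ρ hρ => ?_
      have hρ0 : (0:ℝ) < ρ := hρ
      by_cases hmem : ρ ∈ Set.Ioo (Rm (ω : E3)) (Rp (ω : E3))
      · rw [Set.indicator_of_mem hmem, hgdef, Set.indicator_of_mem ((hball ω ρ).mpr hmem)]
        have hnorm : ‖ρ • (ω : E3)‖ = ρ := by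
          rw [norm_smul, mem_sphere_zero_iff_norm.mp ω.2, mul_one, Real.norm_eq_abs,
            abs_of_pos hρ0]
        show ρ ^ 2 * (Real.exp (-τ * ‖ρ • (ω : E3)‖) / ‖ρ • (ω : E3)‖)
          = ρ * Real.exp (-τ * ρ)
        rw [hnorm]
        field_simp
      · rw [Set.indicator_of_notMem hmem, hgdef,
          Set.indicator_of_notMem (fun hmm => hmem ((hball ω ρ).mp hmm))]
        simp
    rw [heq, setIntegral_indicator measurableSet_Ioo]
  -- the set E_x
  set S : Set (Metric.sphere (0:E3) 1) :=
    {ω : Metric.sphere (0:E3) 1 |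
      (inner ℝ c (ω : E3) : ℝ) > Real.sqrt (‖c‖ ^ 2 - r ^ 2)} with hSdef
  have hScont : Continuous fun ω : Metric.sphere (0:E3) 1 => (inner ℝ c (ω : E3) : ℝ) :=
    Continuous.inner continuous_const continuous_subtype_val
  have hSmeas : MeasurableSet S :=
    (isOpen_lt continuous_const hScont).measurableSet
  have hs0 : Real.sqrt (‖c‖ ^ 2 - r ^ 2) ^ 2 = ‖c‖ ^ 2 - r ^ 2 :=
    Real.sq_sqrt (by nlinarith)
  have hs0nn : (0:ℝ) ≤ Real.sqrt (‖c‖ ^ 2 - r ^ 2) := Real.sqrt_nonneg _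
  set B : Metric.sphere (0:E3) 1 → ℝ :=
    S.indicator (fun ω => (‖c‖ + r) / τ *
      (Real.exp (-τ * Rm (ω : E3)) - Real.exp (-τ * Rp (ω : E3)))) with hBdef
  have hB_int : Integrable B (volume : Measure E3).toSphere := by
    have hcont : Continuous (fun ω : Metric.sphere (0:E3) 1 => (‖c‖ + r) / τ *
        (Real.exp (-τ * Rm (ω : E3)) - Real.exp (-τ * Rp (ω : E3)))) := by
      have hin2 : Continuous fun ω : Metric.sphere (0:E3) 1 =>
          Real.sqrt (r ^ 2 - ‖c‖ ^ 2 + (inner ℝ c (ω : E3) : ℝ) ^ 2) :=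
        Real.continuous_sqrt.comp (continuous_const.add (hScont.pow 2))
      have hRmc : Continuous fun ω : Metric.sphere (0:E3) 1 => Rm (ω : E3) := by
        simp only [hRm]
        exact hScont.sub hin2
      have hRpc : Continuous fun ω : Metric.sphere (0:E3) 1 => Rp (ω : E3) := by
        simp only [hRp]
        exact hScont.add hin2
      exact continuous_const.mul
        ((Real.continuous_exp.comp (continuous_const.mul hRmc)).sub
          (Real.continuous_exp.comp (continuous_const.mul hRpc)))
    exact (hcont.integrable_of_hasCompactSupport
      (isClosed_tsupport _).isCompact).indicator hSmeas
  -- pointwise bound I ≤ B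
  have hIB : ∀ ω : Metric.sphere (0:E3) 1, I ω ≤ B ω := by
    intro ω
    set t : ℝ := (inner ℝ c (ω : E3) : ℝ) with ht
    by_cases hωS : ω ∈ S
    · -- on S
      have htpos : Real.sqrt (‖c‖ ^ 2 - r ^ 2) < t := hωS
      have hD : Rm (ω : E3) = t - Real.sqrt (r ^ 2 - ‖c‖ ^ 2 + t ^ 2) := hRm _
      have hD' : Rp (ω : E3) = t + Real.sqrt (r ^ 2 - ‖c‖ ^ 2 + t ^ 2) := hRp _
      have htpos' : 0 < t := lt_of_le_of_lt hs0nn htpos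
      have hRm_pos : 0 < Rm (ω : E3) := by
        rw [hD]
        have : Real.sqrt (r ^ 2 - ‖c‖ ^ 2 + t ^ 2) < t := by
          rw [Real.sqrt_lt' htpos']
          nlinarith
        linarith
      have hle : Rm (ω : E3) ≤ Rp (ω : E3) := by
        rw [hD, hD']
        have := Real.sqrt_nonneg (r ^ 2 - ‖c‖ ^ 2 + t ^ 2)
        linarith
      have hRp_le : Rp (ω : E3) ≤ ‖c‖ + r := by
        rw [hD']
        have hω1 : ‖(ω : E3)‖ = 1 := mem_sphere_zero_iff_norm.mp ω.2
        have h1 : t ≤ ‖c‖ := by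
          have := real_inner_le_norm c (ω : E3)
          rw [hω1, mul_one] at this
          exact this
        have h2 : |t| ≤ ‖c‖ := by
          have := abs_real_inner_le_norm c (ω : E3)
          rw [hω1, mul_one] at this
          exact this
        have h3 : Real.sqrt (r ^ 2 - ‖c‖ ^ 2 + t ^ 2) ≤ r := by
          have h4 := Real.sqrt_le_sqrt
            (show r ^ 2 - ‖c‖ ^ 2 + t ^ 2 ≤ r ^ 2 by nlinarith [sq_abs t, abs_nonneg t])
          rwa [Real.sqrt_sq hr.le] at h4
        linarith
      have hInter : Set.Ioi (0:ℝ) ∩ Set.Ioo (Rm (ω : E3)) (Rp (ω : E3))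
          = Set.Ioo (Rm (ω : E3)) (Rp (ω : E3)) :=
        Set.inter_eq_self_of_subset_right (fun ρ hρ => lt_trans hRm_pos hρ.1)
      have hIval : I ω = ∫ ρ in (Rm (ω : E3))..(Rp (ω : E3)), ρ * Real.exp (-τ * ρ) := by
        rw [hIeq ω, hInter, ← integral_Ioc_eq_integral_Ioo,
          ← intervalIntegral.integral_of_le hle]
      have hint1 : IntervalIntegrable (fun ρ => ρ * Real.exp (-τ * ρ)) volume
          (Rm (ω : E3)) (Rp (ω : E3)) := by
        apply Continuous.intervalIntegrable
        fun_prop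
      have hint2 : IntervalIntegrable (fun ρ => (‖c‖ + r) * Real.exp (-τ * ρ)) volume
          (Rm (ω : E3)) (Rp (ω : E3)) := by
        apply Continuous.intervalIntegrable
        fun_prop
      have hmono : (∫ ρ in (Rm (ω : E3))..(Rp (ω : E3)), ρ * Real.exp (-τ * ρ))
          ≤ ∫ ρ in (Rm (ω : E3))..(Rp (ω : E3)), (‖c‖ + r) * Real.exp (-τ * ρ) := by
        apply intervalIntegral.integral_mono_on hle hint1 hint2
        intro ρ hρ
        exact mul_le_mul_of_nonneg_right (le_trans hρ.2 hRp_le) (Real.exp_nonneg _)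
      have hval : (∫ ρ in (Rm (ω : E3))..(Rp (ω : E3)), (‖c‖ + r) * Real.exp (-τ * ρ))
          = (‖c‖ + r) / τ *
            (Real.exp (-τ * Rm (ω : E3)) - Real.exp (-τ * Rp (ω : E3))) := by
        rw [intervalIntegral.integral_const_mul, exp_interval_integral τ _ _ (ne_of_gt hτ)]
        ring
      rw [hBdef, Set.indicator_of_mem hωS]
      calc I ω ≤ ∫ ρ in (Rm (ω : E3))..(Rp (ω : E3)), (‖c‖ + r) * Real.exp (-τ * ρ) := by
            rw [hIval]; exact hmono
        _ = _ := hval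
    · -- off S : inner ≤ sqrt, interval misses (0,∞)
      have htle : t ≤ Real.sqrt (‖c‖ ^ 2 - r ^ 2) := not_lt.mp hωS
      have hempty : Set.Ioi (0:ℝ) ∩ Set.Ioo (Rm (ω : E3)) (Rp (ω : E3)) = ∅ := by
        rw [Set.eq_empty_iff_forall_notMem]
        rintro ρ ⟨hρ0, hρIoo⟩
        have hq := (hquad ω ρ).mp hρIoo
        have hρ0' : (0:ℝ) < ρ := hρ0
        nlinarith [sq_nonneg (ρ - Real.sqrt (‖c‖ ^ 2 - r ^ 2)),
          mul_le_mul_of_nonneg_left htle (le_of_lt hρ0')]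
      have hI0 : I ω = 0 := by
        rw [hIeq ω, hempty]
        simp
      rw [hI0, hBdef, Set.indicator_of_notMem hωS]
  -- assemble
  have hle_int : (∫ ω, I ω ∂(volume : Measure E3).toSphere)
      ≤ ∫ ω, B ω ∂(volume : Measure E3).toSphere :=
    integral_mono hI_int hB_int hIB
  have hBint_eq : (∫ ω, B ω ∂(volume : Measure E3).toSphere)
      = (‖c‖ + r) / τ * ∫ ω in S,
          (Real.exp (-τ * Rm (ω : E3)) - Real.exp (-τ * Rp (ω : E3)))
          ∂(volume : Measure E3).toSphere := by
    rw [hBdef, integral_indicator hSmeas, integral_const_mul]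
  rw [step1, hpolar]
  calc (1 / (4 * π)) * (∫ ω, I ω ∂(volume : Measure E3).toSphere)
      ≤ (1 / (4 * π)) * ((‖c‖ + r) / τ * ∫ ω in S,
          (Real.exp (-τ * Rm (ω : E3)) - Real.exp (-τ * Rp (ω : E3)))
          ∂(volume : Measure E3).toSphere) := by
        apply mul_le_mul_of_nonneg_left _ (by positivity)
        rw [← hBint_eq]
        exact hle_int
    _ = (‖c‖ + r) / (4 * π * τ) * ∫ ω in S,
          (Real.exp (-τ * Rm (ω : E3)) - Real.exp (-τ * Rp (ω : E3)))
          ∂(volume : Measure E3).toSphere := by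
        ring
end
end

section
/- Let d > 0, T₀ > d, δ > 0, and let I : (0,∞) → ℝ be a function satisfying liminf_{τ→∞} τ^{δ+1} e^{τd} I(τ) > 0 and limsup_{τ→∞} τ^{1/2} e^{τd} |I(τ)| < ∞. Then lim_{τ→∞} τ^{-1} log I(τ) = -d, and lim_{τ→∞} e^{τ T₀} I(τ) = +∞. -/
open Filter Real

private lemma log_div_tendsto : Filter.Tendsto (fun τ : ℝ => Real.log τ * τ⁻¹)
    Filter.atTop (nhds 0) := by
  have := Real.isLittleO_log_id_atTop.tendsto_div_nhds_zero
  simpa [div_eq_mul_inv] using this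

/-- abstract asymptotic lemma for the enclosure method: two-sided
polynomial-times-exponential bounds on an indicator function `I(τ)` give
`τ⁻¹ log I(τ) → -d` and `e^{τT₀} I(τ) → ∞` for `T₀ > d`. -/
theorem enclosure_asymptotics
    (d T₀ δ : ℝ) (hd : 0 < d) (hT₀ : d < T₀) (hδ : 0 < δ)
    (I : ℝ → ℝ)
    (hlow : 0 < Filter.liminf
      (fun τ : ℝ => τ ^ (δ + 1) * Real.exp (τ * d) * I τ) Filter.atTop)
    (hupp : Filter.IsBoundedUnder (· ≤ ·) Filter.atTop
      (fun τ : ℝ => τ ^ ((1 : ℝ) / 2) * Real.exp (τ * d) * |I τ|)) :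
    Filter.Tendsto (fun τ : ℝ => τ⁻¹ * Real.log (I τ)) Filter.atTop (nhds (-d)) ∧
    Filter.Tendsto (fun τ : ℝ => Real.exp (τ * T₀) * I τ) Filter.atTop Filter.atTop := by
  -- extract a lower bound constant c > 0
  obtain ⟨c, hc, hcev⟩ : ∃ c > 0, ∀ᶠ τ in atTop,
      c ≤ τ ^ (δ + 1) * Real.exp (τ * d) * I τ := by
    rw [Filter.liminf_eq] at hlow
    rcases Set.eq_empty_or_nonempty
        {a | ∀ᶠ τ in atTop, a ≤ τ ^ (δ + 1) * Real.exp (τ * d) * I τ} with h | h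
    · rw [h] at hlow
      simp [Real.sSup_empty] at hlow
    · obtain ⟨a, haS, ha⟩ := exists_lt_of_lt_csSup h hlow
      exact ⟨a, ha, haS⟩
  -- extract an upper bound constant C > 0
  obtain ⟨C₀, hC₀⟩ := hupp
  simp only [Filter.eventually_map] at hC₀
  set C : ℝ := max C₀ 1 with hCdef
  have hC : 0 < C := lt_of_lt_of_le one_pos (le_max_right _ _)
  have hCev : ∀ᶠ τ in atTop, τ ^ ((1 : ℝ) / 2) * Real.exp (τ * d) * |I τ| ≤ C :=
    hC₀.mono fun τ h => h.trans (le_max_left _ _)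
  -- main eventual two-sided bound
  have key : ∀ᶠ τ : ℝ in atTop,
      c * ((τ ^ (δ + 1))⁻¹ * Real.exp (-(τ * d))) ≤ I τ ∧
      I τ ≤ C * ((τ ^ ((1 : ℝ) / 2))⁻¹ * Real.exp (-(τ * d))) := by
    filter_upwards [hcev, hCev, eventually_ge_atTop (1 : ℝ)] with τ h1 h2 hτ
    have hτ0 : (0 : ℝ) < τ := lt_of_lt_of_le one_pos hτ
    have hA : (0 : ℝ) < τ ^ (δ + 1) := Real.rpow_pos_of_pos hτ0 _
    have hB : (0 : ℝ) < τ ^ ((1 : ℝ) / 2) := Real.rpow_pos_of_pos hτ0 _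
    have hE : (0 : ℝ) < Real.exp (τ * d) := Real.exp_pos _
    have hI : c / (τ ^ (δ + 1) * Real.exp (τ * d)) ≤ I τ := by
      rw [div_le_iff₀ (by positivity)]
      linarith [h1]
    have hIpos : 0 < I τ :=
      lt_of_lt_of_le (by positivity) hI
    constructor
    · calc c * ((τ ^ (δ + 1))⁻¹ * Real.exp (-(τ * d)))
          = c / (τ ^ (δ + 1) * Real.exp (τ * d)) := by
            rw [Real.exp_neg]; field_simp
      _ ≤ I τ := hI
    · have := h2
      rw [abs_of_pos hIpos] at this
      have : I τ ≤ C / (τ ^ ((1 : ℝ) / 2) * Real.exp (τ * d)) := by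
        rw [le_div_iff₀ (by positivity)]
        linarith [this]
      calc I τ ≤ C / (τ ^ ((1 : ℝ) / 2) * Real.exp (τ * d)) := this
      _ = C * ((τ ^ ((1 : ℝ) / 2))⁻¹ * Real.exp (-(τ * d))) := by
            rw [Real.exp_neg]; field_simp
  constructor
  · -- first limit: τ⁻¹ log I τ → -d
    have hlb : Filter.Tendsto
        (fun τ : ℝ => τ⁻¹ * Real.log c - (δ + 1) * (Real.log τ * τ⁻¹) - d)
        atTop (nhds (-d)) := by
      have h1 : Filter.Tendsto (fun τ : ℝ => τ⁻¹ * Real.log c) atTop (nhds 0) := by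
        simpa using tendsto_inv_atTop_zero.mul_const (Real.log c)
      have h2 := log_div_tendsto.const_mul (δ + 1)
      have := (h1.sub h2).sub_const d
      simpa using this
    have hub : Filter.Tendsto
        (fun τ : ℝ => τ⁻¹ * Real.log C - (1 / 2 : ℝ) * (Real.log τ * τ⁻¹) - d)
        atTop (nhds (-d)) := by
      have h1 : Filter.Tendsto (fun τ : ℝ => τ⁻¹ * Real.log C) atTop (nhds 0) := by
        simpa using tendsto_inv_atTop_zero.mul_const (Real.log C)
      have h2 := log_div_tendsto.const_mul (1 / 2 : ℝ)
      have := (h1.sub h2).sub_const d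
      simpa using this
    refine tendsto_of_tendsto_of_tendsto_of_le_of_le' hlb hub ?_ ?_
    · filter_upwards [key, eventually_ge_atTop (1 : ℝ)] with τ hk hτ
      have hτ0 : (0 : ℝ) < τ := lt_of_lt_of_le one_pos hτ
      have hlog : Real.log (c * ((τ ^ (δ + 1))⁻¹ * Real.exp (-(τ * d))))
          ≤ Real.log (I τ) :=
        Real.log_le_log (by positivity) hk.1
      have heq : Real.log (c * ((τ ^ (δ + 1))⁻¹ * Real.exp (-(τ * d))))
          = Real.log c - (δ + 1) * Real.log τ - τ * d := by
        rw [Real.log_mul hc.ne' (by positivity), Real.log_mul (by positivity)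
          (Real.exp_ne_zero _), Real.log_inv, Real.log_rpow hτ0, Real.log_exp]
        ring
      rw [heq] at hlog
      have : τ⁻¹ * (Real.log c - (δ + 1) * Real.log τ - τ * d) ≤ τ⁻¹ * Real.log (I τ) :=
        mul_le_mul_of_nonneg_left hlog (by positivity)
      calc τ⁻¹ * Real.log c - (δ + 1) * (Real.log τ * τ⁻¹) - d
          = τ⁻¹ * (Real.log c - (δ + 1) * Real.log τ - τ * d) := by
            field_simp
      _ ≤ τ⁻¹ * Real.log (I τ) := this
    · filter_upwards [key, eventually_ge_atTop (1 : ℝ)] with τ hk hτ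
      have hτ0 : (0 : ℝ) < τ := lt_of_lt_of_le one_pos hτ
      have hIpos : 0 < I τ := lt_of_lt_of_le (by positivity) hk.1
      have hlog : Real.log (I τ)
          ≤ Real.log (C * ((τ ^ ((1 : ℝ) / 2))⁻¹ * Real.exp (-(τ * d)))) :=
        Real.log_le_log hIpos hk.2
      have heq : Real.log (C * ((τ ^ ((1 : ℝ) / 2))⁻¹ * Real.exp (-(τ * d))))
          = Real.log C - (1 / 2 : ℝ) * Real.log τ - τ * d := by
        rw [Real.log_mul hC.ne' (by positivity), Real.log_mul (by positivity)
          (Real.exp_ne_zero _), Real.log_inv, Real.log_rpow hτ0, Real.log_exp]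
        ring
      rw [heq] at hlog
      have : τ⁻¹ * Real.log (I τ)
          ≤ τ⁻¹ * (Real.log C - (1 / 2 : ℝ) * Real.log τ - τ * d) :=
        mul_le_mul_of_nonneg_left hlog (by positivity)
      calc τ⁻¹ * Real.log (I τ)
          ≤ τ⁻¹ * (Real.log C - (1 / 2 : ℝ) * Real.log τ - τ * d) := this
      _ = τ⁻¹ * Real.log C - (1 / 2 : ℝ) * (Real.log τ * τ⁻¹) - d := by
            field_simp
  · -- second limit
    have hexp : Filter.Tendsto
        (fun τ : ℝ => c * (Real.exp ((T₀ - d) * τ) / τ ^ (δ + 1))) atTop atTop :=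
      (tendsto_exp_mul_div_rpow_atTop (δ + 1) (T₀ - d) (by linarith)).const_mul_atTop hc
    refine tendsto_atTop_mono' atTop ?_ hexp
    filter_upwards [key, eventually_ge_atTop (1 : ℝ)] with τ hk hτ
    have hτ0 : (0 : ℝ) < τ := lt_of_lt_of_le one_pos hτ
    have hA : (0 : ℝ) < τ ^ (δ + 1) := Real.rpow_pos_of_pos hτ0 _
    have h := mul_le_mul_of_nonneg_left hk.1 (Real.exp_pos (τ * T₀)).le
    calc c * (Real.exp ((T₀ - d) * τ) / τ ^ (δ + 1))
        = Real.exp (τ * T₀) * (c * ((τ ^ (δ + 1))⁻¹ * Real.exp (-(τ * d)))) := by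
          rw [div_eq_mul_inv, show (T₀ - d) * τ = τ * T₀ + -(τ * d) by ring,
            Real.exp_add]
          ring
    _ ≤ Real.exp (τ * T₀) * I τ := h
end
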